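/- arXiv:2602.01480 — 2 statements merged into one kernel-verified Lean document; each statement's English description precedes it below -/
import Mathlib

section
/- If Σ: [0,∞) → ℝ solves dΣ/dt = f(Σ) with f(Σ) = (η²S²/2 - 2)Σ - η²SQΣ² + (η²Q²/2)Σ³, η, S, Q > 0, S > 2/η, and the initial condition satisfies 0 < Σ(0) < S/Q + 2/(ηQ), then Σ(t) remains in the open interval (0, S/Q + 2/(ηQ)) for all t ≥ 0 and converges to Σ*₋ = S/Q - 2/(ηQ) as t → ∞. -/
open Set Filter

/-- Backward uniqueness barrier: a solution of an autonomous locally-Lipschitz ODE cannot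
reach an equilibrium `c` in finite time unless it starts there. -/
lemma rodflow_barrier {f Sig : ℝ → ℝ}
    (hlip : ∀ M : ℝ, ∃ K : NNReal, LipschitzOnWith K f (Set.Icc (-M) M))
    (hODE : ∀ t ∈ Set.Ici (0 : ℝ), HasDerivWithinAt Sig (f (Sig t)) (Set.Ici 0) t)
    {c : ℝ} (hc : f c = 0) {t₀ : ℝ} (ht₀ : 0 ≤ t₀) (hSig : Sig t₀ = c) :
    Sig 0 = c := by
  rcases eq_or_lt_of_le ht₀ with h | h
  · rw [← h] at hSig; exact hSig
  have hCont : ContinuousOn Sig (Set.Icc 0 t₀) :=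
    fun t ht => ((hODE t ht.1).continuousWithinAt).mono (fun x hx => hx.1)
  obtain ⟨M, hM⟩ := (isCompact_Icc (a := (0:ℝ)) (b := t₀)).exists_bound_of_continuousOn hCont
  obtain ⟨K, hK⟩ := hlip M
  have key : Set.EqOn Sig (fun _ => c) (Set.Icc 0 t₀) := by
    refine ODE_solution_unique_of_mem_Icc_left (v := fun _ x => f x)
      (s := fun _ => Set.Icc (-M) M) (fun _ _ => hK) hCont ?_ ?_
      continuousOn_const ?_ ?_ (by simpa using hSig)
    · intro t ht
      exact (((hODE t ht.1.le).hasDerivAt (Ici_mem_nhds ht.1)).hasDerivWithinAt)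
    · intro t ht
      have := hM t ⟨ht.1.le, ht.2⟩
      rw [Real.norm_eq_abs, abs_le] at this
      exact this
    · intro t ht
      simpa [hc] using (hasDerivWithinAt_const t (Set.Iic t) c)
    · intro t ht
      have := hM t₀ ⟨ht₀, le_rfl⟩
      rw [hSig, Real.norm_eq_abs, abs_le] at this
      exact this
  exact key ⟨le_rfl, ht₀⟩

/-- Forward uniqueness: a solution starting at an equilibrium stays there. -/
lemma rodflow_const {f Sig : ℝ → ℝ}
    (hlip : ∀ M : ℝ, ∃ K : NNReal, LipschitzOnWith K f (Set.Icc (-M) M))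
    (hODE : ∀ t ∈ Set.Ici (0 : ℝ), HasDerivWithinAt Sig (f (Sig t)) (Set.Ici 0) t)
    {c : ℝ} (hc : f c = 0) (h0 : Sig 0 = c) {t₀ : ℝ} (ht₀ : 0 ≤ t₀) :
    Sig t₀ = c := by
  rcases eq_or_lt_of_le ht₀ with h | h
  · rw [← h]; exact h0
  have hCont : ContinuousOn Sig (Set.Icc 0 t₀) :=
    fun t ht => ((hODE t ht.1).continuousWithinAt).mono (fun x hx => hx.1)
  obtain ⟨M, hM⟩ := (isCompact_Icc (a := (0:ℝ)) (b := t₀)).exists_bound_of_continuousOn hCont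
  obtain ⟨K, hK⟩ := hlip M
  have key : Set.EqOn Sig (fun _ => c) (Set.Icc 0 t₀) := by
    refine ODE_solution_unique_of_mem_Icc_right (v := fun _ x => f x)
      (s := fun _ => Set.Icc (-M) M) (fun _ _ => hK) hCont ?_ ?_
      continuousOn_const ?_ ?_ (by simpa using h0)
    · intro t ht
      exact (hODE t ht.1).mono (fun x hx => le_trans ht.1 hx)
    · intro t ht
      have := hM t ⟨ht.1, ht.2.le⟩
      rw [Real.norm_eq_abs, abs_le] at this
      exact this
    · intro t ht
      simpa [hc] using (hasDerivWithinAt_const t (Set.Ici t) c)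
    · intro t ht
      have := hM 0 ⟨le_rfl, ht₀⟩
      rw [h0, Real.norm_eq_abs, abs_le] at this
      exact this
  exact key ⟨ht₀, le_rfl⟩

/-- Phase-line analysis of the Rod Flow cubic on the quartic potential: solutions
started in `(0, Sig*₊)` stay there and converge to `Sig*₋ = S/Q - 2/(ηQ)`. -/
theorem stmt_15 (S η Q : ℝ) (hS : 0 < S) (hη : 0 < η) (hQ : 0 < Q)
    (hEoS : 2 / η < S)
    (f : ℝ → ℝ)
    (hf : ∀ x, f x = (η ^ 2 * S ^ 2 / 2 - 2) * x - η ^ 2 * S * Q * x ^ 2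
      + η ^ 2 * Q ^ 2 / 2 * x ^ 3)
    (Sig : ℝ → ℝ)
    (hODE : ∀ t ∈ Set.Ici (0 : ℝ), HasDerivWithinAt Sig (f (Sig t)) (Set.Ici 0) t)
    (h0 : 0 < Sig 0) (h0' : Sig 0 < S / Q + 2 / (η * Q)) :
    (∀ t ∈ Set.Ici (0 : ℝ), Sig t ∈ Set.Ioo 0 (S / Q + 2 / (η * Q))) ∧
    Filter.Tendsto Sig Filter.atTop (nhds (S / Q - 2 / (η * Q))) := by
  set a := S / Q - 2 / (η * Q) with ha_def
  set b := S / Q + 2 / (η * Q) with hb_def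
  have hηQ : 0 < η * Q := mul_pos hη hQ
  have h2S : 2 < η * S := by
    rw [div_lt_iff₀ hη] at hEoS; linarith [hEoS]
  have ha : 0 < a := by
    rw [ha_def, sub_pos, div_lt_div_iff₀ hηQ hQ]; nlinarith
  have hab : a < b := by
    have : 0 < 2 / (η * Q) := by positivity
    rw [ha_def, hb_def]; linarith
  set k := η ^ 2 * Q ^ 2 / 2 with hk_def
  have hk : 0 < k := by positivity
  have hfact : ∀ x, f x = k * (x * ((x - a) * (x - b))) := by
    intro x
    rw [hf, ha_def, hb_def, hk_def]
    field_simp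
    ring
  have f0 : f 0 = 0 := by rw [hfact]; ring
  have fa : f a = 0 := by rw [hfact]; ring
  have fb : f b = 0 := by rw [hfact]; ring
  have fpos : ∀ x, 0 < x → x < a → 0 < f x := by
    intro x h1 h2
    rw [hfact]
    exact mul_pos hk (mul_pos h1 (mul_pos_of_neg_of_neg (by linarith) (by linarith)))
  have fneg : ∀ x, a < x → x < b → f x < 0 := by
    intro x h1 h2
    rw [hfact]
    exact mul_neg_of_pos_of_neg hk (mul_neg_of_pos_of_neg (by linarith)
      (mul_neg_of_pos_of_neg (by linarith) (by linarith)))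
  set c1 := η ^ 2 * S ^ 2 / 2 - 2 with hc1
  set c2 := η ^ 2 * S * Q with hc2
  set c3 := η ^ 2 * Q ^ 2 / 2 with hc3
  have hfe : f = fun x => c1 * x - c2 * x ^ 2 + c3 * x ^ 3 := funext hf
  have hfC : Continuous f := by rw [hfe]; fun_prop
  have hfd : ∀ x : ℝ, HasDerivAt f (c1 - c2 * (2 * x) + c3 * (3 * x ^ 2)) x := by
    intro x
    rw [hfe]
    have h1 := (hasDerivAt_id x).const_mul c1
    have h2 := (hasDerivAt_pow 2 x).const_mul c2
    have h3 := (hasDerivAt_pow 3 x).const_mul c3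
    have H := (h1.sub h2).add h3
    refine H.congr_deriv ?_
    push_cast
    ring
  have hlip : ∀ M : ℝ, ∃ K : NNReal, LipschitzOnWith K f (Set.Icc (-M) M) := by
    intro M
    refine ⟨(|c1| + |c2| * (2 * M) + |c3| * (3 * M ^ 2)).toNNReal, ?_⟩
    apply (convex_Icc _ _).lipschitzOnWith_of_nnnorm_hasDerivWithin_le
      (f' := fun x => c1 - c2 * (2 * x) + c3 * (3 * x ^ 2))
      (fun x _ => (hfd x).hasDerivWithinAt)
    intro x hx
    have hM0 : 0 ≤ M := by linarith [hx.1, hx.2]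
    have hC0 : 0 ≤ |c1| + |c2| * (2 * M) + |c3| * (3 * M ^ 2) := by positivity
    rw [← NNReal.coe_le_coe, coe_nnnorm, Real.norm_eq_abs, Real.coe_toNNReal _ hC0]
    have habsx : |x| ≤ M := abs_le.mpr ⟨hx.1, hx.2⟩
    have e2 : |c2 * (2 * x)| ≤ |c2| * (2 * M) := by
      rw [abs_mul]
      refine mul_le_mul_of_nonneg_left ?_ (abs_nonneg _)
      rw [abs_mul, abs_two]
      linarith
    have e3 : |c3 * (3 * x ^ 2)| ≤ |c3| * (3 * M ^ 2) := by
      rw [abs_mul]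
      refine mul_le_mul_of_nonneg_left ?_ (abs_nonneg _)
      rw [abs_mul, abs_of_nonneg (by norm_num : (0:ℝ) ≤ 3), abs_of_nonneg (sq_nonneg x)]
      nlinarith [sq_le_sq' hx.1 hx.2]
    calc |c1 - c2 * (2 * x) + c3 * (3 * x ^ 2)|
        ≤ |c1 - c2 * (2 * x)| + |c3 * (3 * x ^ 2)| := abs_add_le _ _
      _ ≤ |c1| + |c2 * (2 * x)| + |c3 * (3 * x ^ 2)| := by
          linarith [abs_sub c1 (c2 * (2 * x))]
      _ ≤ |c1| + |c2| * (2 * M) + |c3| * (3 * M ^ 2) := by linarith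
  have hCont : ContinuousOn Sig (Set.Ici 0) := fun t ht => (hODE t ht).continuousWithinAt
  have hDeriv : ∀ t : ℝ, 0 < t → HasDerivAt Sig (f (Sig t)) t :=
    fun t ht => (hODE t ht.le).hasDerivAt (Ici_mem_nhds ht)
  have hpos : ∀ t, 0 ≤ t → 0 < Sig t := by
    intro t ht
    by_contra hcon
    push_neg at hcon
    have h00 : (0:ℝ) ∈ Set.Icc (Sig t) (Sig 0) := ⟨hcon, h0.le⟩
    obtain ⟨s, hs, hs0⟩ := intermediate_value_Icc' ht
      (hCont.mono (fun x hx => hx.1)) h00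
    exact absurd (rodflow_barrier hlip hODE f0 hs.1 hs0) h0.ne'
  have hltb : ∀ t, 0 ≤ t → Sig t < b := by
    intro t ht
    by_contra hcon
    push_neg at hcon
    have hbb : b ∈ Set.Icc (Sig 0) (Sig t) := ⟨h0'.le, hcon⟩
    obtain ⟨s, hs, hs0⟩ := intermediate_value_Icc ht
      (hCont.mono (fun x hx => hx.1)) hbb
    exact absurd (rodflow_barrier hlip hODE fb hs.1 hs0) h0'.ne
  refine ⟨fun t ht => ⟨hpos t ht, hltb t ht⟩, ?_⟩
  rcases lt_trichotomy (Sig 0) a with hlt | heq | hgt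
  · -- increasing case
    have hlta : ∀ t, 0 ≤ t → Sig t < a := by
      intro t ht
      by_contra hcon
      push_neg at hcon
      have haa : a ∈ Set.Icc (Sig 0) (Sig t) := ⟨hlt.le, hcon⟩
      obtain ⟨s, hs, hs0⟩ := intermediate_value_Icc ht
        (hCont.mono (fun x hx => hx.1)) haa
      exact absurd (rodflow_barrier hlip hODE fa hs.1 hs0) hlt.ne
    have mono : MonotoneOn Sig (Set.Ici 0) := by
      apply monotoneOn_of_deriv_nonneg (convex_Ici 0) hCont
      · intro t ht
        rw [interior_Ici] at ht
        exact (hDeriv t ht).differentiableAt.differentiableWithinAt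
      · intro t ht
        rw [interior_Ici] at ht
        rw [(hDeriv t ht).deriv]
        exact (fpos _ (hpos t ht.le) (hlta t ht.le)).le
    set g := fun t : ℝ => Sig (max t 0) with hg_def
    have hg_eq : ∀ t : ℝ, 0 ≤ t → g t = Sig t := by
      intro t ht; simp [hg_def, max_eq_left ht]
    have gmono : Monotone g := fun s t hst =>
      mono (le_max_right s 0) (le_max_right t 0) (max_le_max hst le_rfl)
    have gbdd : BddAbove (Set.range g) := by
      refine ⟨a, ?_⟩
      rintro _ ⟨t, rfl⟩
      exact (hlta _ (le_max_right t 0)).le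
    set L := ⨆ t, g t with hL_def
    have hgten : Tendsto g atTop (nhds L) := tendsto_atTop_ciSup gmono gbdd
    have hSten : Tendsto Sig atTop (nhds L) := by
      apply hgten.congr'
      filter_upwards [eventually_ge_atTop (0:ℝ)] with t ht
      exact hg_eq t ht
    have hLle : ∀ t, 0 ≤ t → Sig t ≤ L := by
      intro t ht
      rw [← hg_eq t ht]
      exact le_ciSup gbdd t
    have hS0L : Sig 0 ≤ L := hLle 0 le_rfl
    have hLlea : L ≤ a := ciSup_le (fun t => (hlta _ (le_max_right t 0)).le)
    have hLa : L = a := by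
      by_contra hne
      have hL_lt : L < a := lt_of_le_of_ne hLlea hne
      obtain ⟨x₀, hx₀, hminn⟩ := isCompact_Icc.exists_isMinOn
        (Set.nonempty_Icc.mpr hS0L) hfC.continuousOn
      set ε := f x₀ with hε_def
      have hε : 0 < ε := fpos x₀ (lt_of_lt_of_le h0 hx₀.1) (lt_of_le_of_lt hx₀.2 hL_lt)
      have hfge : ∀ t, 0 ≤ t → ε ≤ f (Sig t) := by
        intro t ht
        exact hminn ⟨mono (le_refl (0:ℝ)) ht ht, hLle t ht⟩
      have hmono2 : MonotoneOn (fun t => Sig t - ε * t) (Set.Ici 0) := by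
        apply monotoneOn_of_deriv_nonneg (convex_Ici 0)
          (hCont.sub (Continuous.continuousOn (by fun_prop : Continuous fun t : ℝ => ε * t)))
        · intro t ht
          rw [interior_Ici] at ht
          exact ((hDeriv t ht).sub ((hasDerivAt_id t).const_mul ε)).differentiableAt.differentiableWithinAt
        · intro t ht
          rw [interior_Ici] at ht
          have hd : HasDerivAt (fun t => Sig t - ε * t) (f (Sig t) - ε * 1) t :=
            (hDeriv t ht).sub ((hasDerivAt_id t).const_mul ε)
          rw [show (Sig - fun t => ε * t) = (fun t => Sig t - ε * t) from rfl, hd.deriv]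
          have := hfge t ht.le
          linarith
      obtain ⟨T, hT, hTs⟩ : ∃ T, 0 ≤ T ∧ ε * T = (L - Sig 0) + ε := by
        refine ⟨(L - Sig 0) / ε + 1, ?_, ?_⟩
        · have h1 : 0 ≤ (L - Sig 0) / ε := div_nonneg (by linarith) hε.le
          linarith
        · field_simp
      have hmm := hmono2 (Set.self_mem_Ici) (Set.mem_Ici.mpr hT) hT
      simp only [mul_zero, sub_zero] at hmm
      have hTL := hLle T hT
      linarith
    rw [← hLa]
    exact hSten
  · -- constant case
    have hconst : ∀ t, 0 ≤ t → Sig t = a := fun t ht => rodflow_const hlip hODE fa heq ht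
    have : Tendsto Sig atTop (nhds a) := by
      apply Tendsto.congr' _ tendsto_const_nhds
      filter_upwards [eventually_ge_atTop (0:ℝ)] with t ht
      exact (hconst t ht).symm
    exact this
  · -- decreasing case
    have hgta : ∀ t, 0 ≤ t → a < Sig t := by
      intro t ht
      by_contra hcon
      push_neg at hcon
      have haa : a ∈ Set.Icc (Sig t) (Sig 0) := ⟨hcon, hgt.le⟩
      obtain ⟨s, hs, hs0⟩ := intermediate_value_Icc' ht
        (hCont.mono (fun x hx => hx.1)) haa
      exact absurd (rodflow_barrier hlip hODE fa hs.1 hs0) hgt.ne'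
    have anti : AntitoneOn Sig (Set.Ici 0) := by
      apply antitoneOn_of_deriv_nonpos (convex_Ici 0) hCont
      · intro t ht
        rw [interior_Ici] at ht
        exact (hDeriv t ht).differentiableAt.differentiableWithinAt
      · intro t ht
        rw [interior_Ici] at ht
        rw [(hDeriv t ht).deriv]
        exact (fneg _ (hgta t ht.le) (hltb t ht.le)).le
    set g := fun t : ℝ => Sig (max t 0) with hg_def
    have hg_eq : ∀ t : ℝ, 0 ≤ t → g t = Sig t := by
      intro t ht; simp [hg_def, max_eq_left ht]
    have ganti : Antitone g := fun s t hst =>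
      anti (le_max_right s 0) (le_max_right t 0) (max_le_max hst le_rfl)
    have gbdd : BddBelow (Set.range g) := by
      refine ⟨a, ?_⟩
      rintro _ ⟨t, rfl⟩
      exact (hgta _ (le_max_right t 0)).le
    set L := ⨅ t, g t with hL_def
    have hgten : Tendsto g atTop (nhds L) := tendsto_atTop_ciInf ganti gbdd
    have hSten : Tendsto Sig atTop (nhds L) := by
      apply hgten.congr'
      filter_upwards [eventually_ge_atTop (0:ℝ)] with t ht
      exact hg_eq t ht
    have hLle : ∀ t, 0 ≤ t → L ≤ Sig t := by
      intro t ht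
      rw [← hg_eq t ht]
      exact ciInf_le gbdd t
    have hS0L : L ≤ Sig 0 := hLle 0 le_rfl
    have hLgea : a ≤ L := le_ciInf (fun t => (hgta _ (le_max_right t 0)).le)
    have hLa : L = a := by
      by_contra hne
      have hL_gt : a < L := lt_of_le_of_ne hLgea (Ne.symm hne)
      obtain ⟨x₀, hx₀, hmaxx⟩ := isCompact_Icc.exists_isMaxOn
        (Set.nonempty_Icc.mpr hS0L) hfC.continuousOn
      set ε := -f x₀ with hε_def
      have hε : 0 < ε := by
        have := fneg x₀ (lt_of_lt_of_le hL_gt hx₀.1) (lt_of_le_of_lt hx₀.2 (hltb 0 le_rfl))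
        rw [hε_def]; linarith
      have hfle : ∀ t, 0 ≤ t → f (Sig t) ≤ -ε := by
        intro t ht
        have := hmaxx ⟨hLle t ht, anti (le_refl (0:ℝ)) ht ht⟩
        rw [hε_def]; simpa using this
      have hanti2 : AntitoneOn (fun t => Sig t + ε * t) (Set.Ici 0) := by
        apply antitoneOn_of_deriv_nonpos (convex_Ici 0)
          (hCont.add (Continuous.continuousOn (by fun_prop : Continuous fun t : ℝ => ε * t)))
        · intro t ht
          rw [interior_Ici] at ht
          exact ((hDeriv t ht).add ((hasDerivAt_id t).const_mul ε)).differentiableAt.differentiableWithinAt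
        · intro t ht
          rw [interior_Ici] at ht
          have hd : HasDerivAt (fun t => Sig t + ε * t) (f (Sig t) + ε * 1) t :=
            (hDeriv t ht).add ((hasDerivAt_id t).const_mul ε)
          rw [show (Sig + fun t => ε * t) = (fun t => Sig t + ε * t) from rfl, hd.deriv]
          have := hfle t ht.le
          linarith
      obtain ⟨T, hT, hTs⟩ : ∃ T, 0 ≤ T ∧ ε * T = (Sig 0 - L) + ε := by
        refine ⟨(Sig 0 - L) / ε + 1, ?_, ?_⟩
        · have h1 : 0 ≤ (Sig 0 - L) / ε := div_nonneg (by linarith) hε.le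
          linarith
        · field_simp
      have hmm := hanti2 (Set.self_mem_Ici) (Set.mem_Ici.mpr hT) hT
      simp only [mul_zero, add_zero] at hmm
      have hTL := hLle T hT
      linarith
    rw [← hLa]
    exact hSten
end

section
/- Let V: ℝ^p → ℝ^p be twice continuously differentiable and let x(t) solve the modified ODE ẋ = V(x) - (1/2)DV(x)·V(x). Then x(t+1) = x(t) + V(x(t)) + O(‖V‖³) in the sense that, if V is replaced by εV, the one-step error x(t+1) - x(t) - εV(x(t)) is O(ε³) as ε → 0 (for fixed x(t)). -/
open Set Metric intervalIntegral

set_option maxHeartbeats 1000000 in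
/-- Backward error analysis: the time-1 flow of the modified vector field
`εV - (ε²/2) DV·V` agrees with the Euler step `x₀ + εV(x₀)` up to `O(ε³)`. -/
theorem stmt_16 {p : ℕ} (V : EuclideanSpace ℝ (Fin p) → EuclideanSpace ℝ (Fin p))
    (hV : ContDiff ℝ 2 V) (x₀ : EuclideanSpace ℝ (Fin p))
    (x : ℝ → ℝ → EuclideanSpace ℝ (Fin p))
    (hflow : ∀ ε t, HasDerivAt (x ε)
      (ε • V (x ε t) - (ε ^ 2 / 2) • fderiv ℝ V (x ε t) (V (x ε t))) t)
    (hinit : ∀ ε, x ε 0 = x₀) :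
    (fun ε : ℝ => x ε 1 - x₀ - ε • V x₀) =O[nhds 0] fun ε : ℝ => ε ^ 3 := by
  classical
  have hVc : Continuous V := hV.continuous
  have hVd : Differentiable ℝ V := hV.differentiable (by norm_num)
  have hV1 : ContDiff ℝ 1 (fderiv ℝ V) := hV.fderiv_right (m := 1) (by norm_num)
  have hDVc : Continuous (fderiv ℝ V) := hV1.continuous
  set W : EuclideanSpace ℝ (Fin p) → EuclideanSpace ℝ (Fin p) :=
    fun y => fderiv ℝ V y (V y) with hWdef
  have hW1 : ContDiff ℝ 1 W := hV1.clm_apply (hV.of_le one_le_two)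
  have hWc : Continuous W := hW1.continuous
  set K : Set (EuclideanSpace ℝ (Fin p)) := Metric.closedBall x₀ 1 with hKdef
  have hKc : IsCompact K := isCompact_closedBall x₀ 1
  have hKconv : Convex ℝ K := convex_closedBall x₀ 1
  have hx₀K : x₀ ∈ K := Metric.mem_closedBall_self zero_le_one
  obtain ⟨M₀, hM₀⟩ := hKc.exists_bound_of_continuousOn hVc.continuousOn
  obtain ⟨N₀, hN₀⟩ := hKc.exists_bound_of_continuousOn hDVc.continuousOn
  obtain ⟨L₀, hL₀⟩ := hKc.exists_bound_of_continuousOn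
    ((hW1.fderiv_right (m := 0) le_rfl).continuous).continuousOn
  set M := max M₀ 0 with hMdef
  set N := max N₀ 0 with hNdef
  set L := max L₀ 0 with hLdef
  have hM0 : 0 ≤ M := le_max_right _ _
  have hN0 : 0 ≤ N := le_max_right _ _
  have hL0 : 0 ≤ L := le_max_right _ _
  have hM : ∀ y ∈ K, ‖V y‖ ≤ M := fun y hy => (hM₀ y hy).trans (le_max_left _ _)
  have hN : ∀ y ∈ K, ‖fderiv ℝ V y‖ ≤ N := fun y hy => (hN₀ y hy).trans (le_max_left _ _)
  have hWbound : ∀ y ∈ K, ‖W y‖ ≤ N * M := fun y hy =>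
    ((fderiv ℝ V y).le_opNorm (V y)).trans
      (mul_le_mul (hN y hy) (hM y hy) (norm_nonneg _) hN0)
  have hWlip : ∀ y ∈ K, ‖W y - W x₀‖ ≤ L * ‖y - x₀‖ := fun y hy =>
    hKconv.norm_image_sub_le_of_norm_fderiv_le
      (fun z _ => (hW1.differentiable one_ne_zero) z)
      (fun z hz => (hL₀ z hz).trans (le_max_left _ _)) hx₀K hy
  set C₀ : ℝ := M + N * M / 2 with hC₀def
  have hC₀0 : 0 ≤ C₀ := by positivity
  set δ : ℝ := min 1 (1 / (2 * (C₀ + 1))) with hδdef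
  have hδpos : 0 < δ := lt_min one_pos (by positivity)
  have hδ1 : δ ≤ 1 := min_le_left _ _
  have hεC : ∀ ε : ℝ, |ε| ≤ δ → |ε| * C₀ ≤ 1 / 2 := by
    intro ε hε
    have h2 : |ε| ≤ 1 / (2 * (C₀ + 1)) := hε.trans (min_le_right _ _)
    have h3 := mul_le_mul_of_nonneg_right h2 hC₀0
    have h4 : 1 / (2 * (C₀ + 1)) * C₀ ≤ 1 / 2 := by
      rw [div_mul_eq_mul_div, div_le_div_iff₀ (by positivity) two_pos]
      nlinarith
    linarith
  -- derivative bound while the trajectory stays in `K`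
  have hdb : ∀ ε : ℝ, |ε| ≤ δ → ∀ t : ℝ, x ε t ∈ K →
      ‖ε • V (x ε t) - (ε ^ 2 / 2) • fderiv ℝ V (x ε t) (V (x ε t))‖ ≤ |ε| * C₀ := by
    intro ε hε t ht
    have hε1 : |ε| ≤ 1 := hε.trans hδ1
    have h1 : ‖ε • V (x ε t)‖ ≤ |ε| * M := by
      rw [norm_smul, Real.norm_eq_abs]
      exact mul_le_mul_of_nonneg_left (hM _ ht) (abs_nonneg ε)
    have h2 : ‖(ε ^ 2 / 2) • fderiv ℝ V (x ε t) (V (x ε t))‖ ≤ |ε| * (N * M / 2) := by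
      rw [norm_smul, Real.norm_eq_abs]
      have habs : |ε ^ 2 / 2| = |ε| * |ε| / 2 := by
        rw [abs_of_nonneg (by positivity), ← sq_abs]; ring
      rw [habs]
      have hw : ‖fderiv ℝ V (x ε t) (V (x ε t))‖ ≤ N * M := hWbound _ ht
      have habs0 : (0:ℝ) ≤ |ε| := abs_nonneg ε
      have step1 : |ε| * |ε| / 2 * ‖fderiv ℝ V (x ε t) (V (x ε t))‖
          ≤ |ε| * |ε| / 2 * (N * M) := by
        apply mul_le_mul_of_nonneg_left hw (by positivity)
      nlinarith [step1, mul_nonneg habs0 (mul_nonneg hN0 hM0),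
        mul_le_mul_of_nonneg_right hε1 (mul_nonneg habs0 (mul_nonneg hN0 hM0))]
    calc ‖ε • V (x ε t) - (ε ^ 2 / 2) • fderiv ℝ V (x ε t) (V (x ε t))‖
        ≤ ‖ε • V (x ε t)‖ + ‖(ε ^ 2 / 2) • fderiv ℝ V (x ε t) (V (x ε t))‖ := norm_sub_le _ _
      _ ≤ |ε| * M + |ε| * (N * M / 2) := add_le_add h1 h2
      _ = |ε| * C₀ := by rw [hC₀def]; ring
  -- invariance of a small ball
  have key : ∀ ε : ℝ, |ε| ≤ δ → ∀ t ∈ Icc (0:ℝ) 1, ‖x ε t - x₀‖ ≤ |ε| * C₀ * t := by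
    intro ε hε
    have hfc : Continuous (x ε) := by
      rw [continuous_iff_continuousAt]
      exact fun t => (hflow ε t).differentiableAt.continuousAt
    set s : Set ℝ := {t | ‖x ε t - x₀‖ ≤ |ε| * C₀ * t} with hsdef
    have hclosed : IsClosed s :=
      isClosed_le ((hfc.sub continuous_const).norm) (continuous_const.mul continuous_id)
    have h0 : (0:ℝ) ∈ s := by simp [hsdef, hinit ε]
    have main : Icc (0:ℝ) 1 ⊆ s := by
      apply (hclosed.inter isClosed_Icc).Icc_subset_of_forall_exists_gt h0
      rintro a ⟨has, ha0, ha1⟩ y hy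
      have hεC' := hεC ε hε
      have hfaK : ‖x ε a - x₀‖ < 1 := by
        have h5 : |ε| * C₀ * a ≤ 1 / 2 := by
          nlinarith [mul_le_mul_of_nonneg_right hεC' ha0,
            mul_nonneg (mul_nonneg (abs_nonneg ε) hC₀0) ha0]
        have h6 : ‖x ε a - x₀‖ ≤ |ε| * C₀ * a := has
        exact lt_of_le_of_lt (h6.trans h5) (by norm_num)
      have hopen : IsOpen {t : ℝ | x ε t ∈ Metric.ball x₀ 1} :=
        Metric.isOpen_ball.preimage hfc
      obtain ⟨η, hη0, hηsub⟩ := Metric.isOpen_iff.1 hopen a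
        (by simpa [Metric.mem_ball, dist_eq_norm] using hfaK)
      set z := min (min (a + η / 2) 1) y with hzdef
      have hza : a < z := lt_min (lt_min (by linarith) ha1) hy
      have hmem : ∀ u ∈ Icc a z, x ε u ∈ K := by
        intro u hu
        have h1 : u ≤ a + η / 2 := hu.2.trans ((min_le_left _ _).trans (min_le_left _ _))
        have h2 : dist u a < η := by
          rw [Real.dist_eq, abs_of_nonneg (by linarith [hu.1])]; linarith
        exact Metric.ball_subset_closedBall (hηsub h2)
      have hmvt := norm_image_sub_le_of_norm_deriv_le_segment'
        (f := x ε) (a := a) (b := z)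
        (f' := fun u => ε • V (x ε u) - (ε ^ 2 / 2) • fderiv ℝ V (x ε u) (V (x ε u)))
        (C := |ε| * C₀)
        (fun u _ => (hflow ε u).hasDerivWithinAt)
        (fun u hu => hdb ε hε u (hmem u (Ico_subset_Icc_self hu)))
        z (right_mem_Icc.2 hza.le)
      refine ⟨z, ?_, hza, min_le_right _ _⟩
      rw [hsdef, mem_setOf_eq]
      have htri : ‖x ε z - x₀‖ ≤ ‖x ε z - x ε a‖ + ‖x ε a - x₀‖ :=
        norm_sub_le_norm_sub_add_norm_sub _ _ _
      have has' : ‖x ε a - x₀‖ ≤ |ε| * C₀ * a := has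
      calc ‖x ε z - x₀‖ ≤ ‖x ε z - x ε a‖ + ‖x ε a - x₀‖ := htri
        _ ≤ |ε| * C₀ * (z - a) + |ε| * C₀ * a := add_le_add hmvt has'
        _ = |ε| * C₀ * z := by ring
    exact fun t ht => main ht
  -- main estimate
  set C₁ : ℝ := L * C₀ + N * (N * M) / 2 with hC₁def
  have hC₁0 : 0 ≤ C₁ := by positivity
  set C₂ : ℝ := C₁ + L * C₀ / 2 with hC₂def
  have hC₂0 : 0 ≤ C₂ := by positivity
  rw [Asymptotics.isBigO_iff]
  refine ⟨C₂, ?_⟩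
  filter_upwards [Metric.closedBall_mem_nhds (0:ℝ) hδpos] with ε hε
  have hεδ : |ε| ≤ δ := by rwa [Metric.mem_closedBall, Real.dist_eq, sub_zero] at hε
  have hε1 : |ε| ≤ 1 := hεδ.trans hδ1
  have hfc : Continuous (x ε) := by
    rw [continuous_iff_continuousAt]
    exact fun t => (hflow ε t).differentiableAt.continuousAt
  have hnorm : ∀ t ∈ Icc (0:ℝ) 1, ‖x ε t - x₀‖ ≤ |ε| * C₀ := by
    intro t ht
    refine (key ε hεδ t ht).trans ?_
    calc |ε| * C₀ * t ≤ |ε| * C₀ * 1 :=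
          mul_le_mul_of_nonneg_left ht.2 (mul_nonneg (abs_nonneg ε) hC₀0)
      _ = |ε| * C₀ := mul_one _
  have hK' : ∀ t ∈ Icc (0:ℝ) 1, x ε t ∈ K := by
    intro t ht
    rw [hKdef, Metric.mem_closedBall, dist_eq_norm]
    exact (hnorm t ht).trans ((hεC ε hεδ).trans (by norm_num))
  -- derivative of V ∘ (x ε)
  have hF : ∀ t : ℝ, HasDerivAt (fun u => V (x ε u))
      (ε • W (x ε t) - (ε ^ 2 / 2) • (fderiv ℝ V (x ε t)) (W (x ε t))) t := by
    intro t
    have h := (hVd (x ε t)).hasFDerivAt.comp_hasDerivAt t (hflow ε t)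
    refine h.congr_deriv ?_
    rw [map_sub, map_smul, map_smul]
  -- Taylor-type bound
  have hA : ∀ t ∈ Icc (0:ℝ) 1, ‖V (x ε t) - V x₀ - (ε * t) • W x₀‖ ≤ C₁ * ε ^ 2 := by
    intro t ht
    have hint : ∀ u ∈ uIcc (0:ℝ) t, HasDerivAt
        (fun v => V (x ε v) - (ε * v) • W x₀)
        ((ε • W (x ε u) - (ε ^ 2 / 2) • (fderiv ℝ V (x ε u)) (W (x ε u))) - ε • W x₀) u := by
      intro u _
      have h2 : HasDerivAt (fun v : ℝ => (ε * v) • W x₀) (ε • W x₀) u := by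
        simpa using ((hasDerivAt_id u).const_mul ε).smul_const (W x₀)
      exact (hF u).sub h2
    have hcont : Continuous fun u =>
        (ε • W (x ε u) - (ε ^ 2 / 2) • (fderiv ℝ V (x ε u)) (W (x ε u))) - ε • W x₀ := by
      apply Continuous.sub _ continuous_const
      exact ((hWc.comp hfc).const_smul ε).sub
        (((hDVc.comp hfc).clm_apply (hWc.comp hfc)).const_smul (ε ^ 2 / 2))
    have heq := intervalIntegral.integral_eq_sub_of_hasDerivAt hint
      (hcont.intervalIntegrable 0 t)
    have hbound : ∀ u ∈ Set.uIoc (0:ℝ) t,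
        ‖(ε • W (x ε u) - (ε ^ 2 / 2) • (fderiv ℝ V (x ε u)) (W (x ε u))) - ε • W x₀‖
          ≤ C₁ * ε ^ 2 := by
      intro u hu
      have huI : u ∈ Icc (0:ℝ) 1 := by
        rw [uIoc_of_le ht.1] at hu
        exact ⟨hu.1.le, hu.2.trans ht.2⟩
      have hKu := hK' u huI
      have h1 : ‖ε • (W (x ε u) - W x₀)‖ ≤ |ε| * (L * (|ε| * C₀)) := by
        rw [norm_smul, Real.norm_eq_abs]
        exact mul_le_mul_of_nonneg_left
          ((hWlip _ hKu).trans (mul_le_mul_of_nonneg_left (hnorm u huI) hL0)) (abs_nonneg ε)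
      have h2 : ‖(ε ^ 2 / 2) • (fderiv ℝ V (x ε u)) (W (x ε u))‖ ≤ ε ^ 2 / 2 * (N * (N * M)) := by
        rw [norm_smul, Real.norm_eq_abs, abs_of_nonneg (by positivity : (0:ℝ) ≤ ε ^ 2 / 2)]
        apply mul_le_mul_of_nonneg_left _ (by positivity)
        exact ((fderiv ℝ V (x ε u)).le_opNorm (W (x ε u))).trans
          (mul_le_mul (hN _ hKu) (hWbound _ hKu) (norm_nonneg _) hN0)
      have hre : (ε • W (x ε u) - (ε ^ 2 / 2) • (fderiv ℝ V (x ε u)) (W (x ε u))) - ε • W x₀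
          = ε • (W (x ε u) - W x₀) - (ε ^ 2 / 2) • (fderiv ℝ V (x ε u)) (W (x ε u)) := by
        module
      rw [hre]
      calc ‖ε • (W (x ε u) - W x₀) - (ε ^ 2 / 2) • (fderiv ℝ V (x ε u)) (W (x ε u))‖
          ≤ ‖ε • (W (x ε u) - W x₀)‖ + ‖(ε ^ 2 / 2) • (fderiv ℝ V (x ε u)) (W (x ε u))‖ :=
            norm_sub_le _ _
        _ ≤ |ε| * (L * (|ε| * C₀)) + ε ^ 2 / 2 * (N * (N * M)) := add_le_add h1 h2
        _ = C₁ * ε ^ 2 := by rw [hC₁def, ← sq_abs ε]; ring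
    have hle := intervalIntegral.norm_integral_le_of_norm_le_const hbound
    rw [heq] at hle
    have hsimp : (V (x ε t) - (ε * t) • W x₀) - (V (x ε 0) - (ε * 0) • W x₀)
        = V (x ε t) - V x₀ - (ε * t) • W x₀ := by
      rw [hinit ε]
      simp
      abel
    rw [hsimp] at hle
    have habs : |t - 0| ≤ 1 := by
      rw [sub_zero, abs_of_nonneg ht.1]; exact ht.2
    calc ‖V (x ε t) - V x₀ - (ε * t) • W x₀‖ ≤ C₁ * ε ^ 2 * |t - 0| := hle
      _ ≤ C₁ * ε ^ 2 * 1 := by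
          apply mul_le_mul_of_nonneg_left habs (by positivity)
      _ = C₁ * ε ^ 2 := mul_one _
  -- FTC for the full step
  have hmain : ∀ u ∈ uIcc (0:ℝ) 1, HasDerivAt
      (fun v => x ε v - (ε * v) • V x₀ - (ε ^ 2 * (v ^ 2 / 2 - v / 2)) • W x₀)
      ((ε • V (x ε u) - (ε ^ 2 / 2) • fderiv ℝ V (x ε u) (V (x ε u)))
        - ε • V x₀ - (ε ^ 2 * (u - 1 / 2)) • W x₀) u := by
    intro u _
    have h1 : HasDerivAt (fun v : ℝ => (ε * v) • V x₀) (ε • V x₀) u := by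
      simpa using ((hasDerivAt_id u).const_mul ε).smul_const (V x₀)
    have h2 : HasDerivAt (fun v : ℝ => (ε ^ 2 * (v ^ 2 / 2 - v / 2)) • W x₀)
        ((ε ^ 2 * (u - 1 / 2)) • W x₀) u := by
      have hs : HasDerivAt (fun v : ℝ => ε ^ 2 * (v ^ 2 / 2 - v / 2)) (ε ^ 2 * (u - 1 / 2)) u := by
        have := (((hasDerivAt_pow 2 u).div_const 2).sub
          ((hasDerivAt_id u).div_const 2)).const_mul (ε ^ 2)
        refine this.congr_deriv ?_
        push_cast
        ring
      exact hs.smul_const (W x₀)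
    exact ((hflow ε u).sub h1).sub h2
  have hGcont : Continuous fun u : ℝ =>
      (ε • V (x ε u) - (ε ^ 2 / 2) • fderiv ℝ V (x ε u) (V (x ε u)))
        - ε • V x₀ - (ε ^ 2 * (u - 1 / 2)) • W x₀ := by
    apply Continuous.sub
    · apply Continuous.sub _ continuous_const
      exact ((hVc.comp hfc).const_smul ε).sub
        (((hDVc.comp hfc).clm_apply (hVc.comp hfc)).const_smul (ε ^ 2 / 2))
    · exact Continuous.smul (continuous_const.mul (continuous_id.sub continuous_const))
        (continuous_const : Continuous fun _ : ℝ => W x₀)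
  have heq2 := intervalIntegral.integral_eq_sub_of_hasDerivAt hmain
    (hGcont.intervalIntegrable 0 1)
  have hGbound : ∀ u ∈ Set.uIoc (0:ℝ) 1,
      ‖(ε • V (x ε u) - (ε ^ 2 / 2) • fderiv ℝ V (x ε u) (V (x ε u)))
        - ε • V x₀ - (ε ^ 2 * (u - 1 / 2)) • W x₀‖ ≤ C₂ * |ε| ^ 3 := by
    intro u hu
    have huI : u ∈ Icc (0:ℝ) 1 := by
      rw [uIoc_of_le zero_le_one] at hu
      exact Ioc_subset_Icc_self hu
    have hKu := hK' u huI
    have hA' := hA u huI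
    have hW' : ‖W (x ε u) - W x₀‖ ≤ L * (|ε| * C₀) :=
      (hWlip _ hKu).trans (mul_le_mul_of_nonneg_left (hnorm u huI) hL0)
    have hdecomp : (ε • V (x ε u) - (ε ^ 2 / 2) • fderiv ℝ V (x ε u) (V (x ε u)))
        - ε • V x₀ - (ε ^ 2 * (u - 1 / 2)) • W x₀
        = ε • (V (x ε u) - V x₀ - (ε * u) • W x₀) - (ε ^ 2 / 2) • (W (x ε u) - W x₀) := by
      simp only [hWdef]
      module
    rw [hdecomp]
    have h1 : ‖ε • (V (x ε u) - V x₀ - (ε * u) • W x₀)‖ ≤ |ε| * (C₁ * ε ^ 2) := by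
      rw [norm_smul, Real.norm_eq_abs]
      exact mul_le_mul_of_nonneg_left hA' (abs_nonneg ε)
    have h2 : ‖(ε ^ 2 / 2) • (W (x ε u) - W x₀)‖ ≤ ε ^ 2 / 2 * (L * (|ε| * C₀)) := by
      rw [norm_smul, Real.norm_eq_abs, abs_of_nonneg (by positivity : (0:ℝ) ≤ ε ^ 2 / 2)]
      exact mul_le_mul_of_nonneg_left hW' (by positivity)
    calc ‖ε • (V (x ε u) - V x₀ - (ε * u) • W x₀) - (ε ^ 2 / 2) • (W (x ε u) - W x₀)‖
        ≤ ‖ε • (V (x ε u) - V x₀ - (ε * u) • W x₀)‖ + ‖(ε ^ 2 / 2) • (W (x ε u) - W x₀)‖ :=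
          norm_sub_le _ _
      _ ≤ |ε| * (C₁ * ε ^ 2) + ε ^ 2 / 2 * (L * (|ε| * C₀)) := add_le_add h1 h2
      _ = C₂ * |ε| ^ 3 := by rw [hC₂def, ← sq_abs ε]; ring
  have hle2 := intervalIntegral.norm_integral_le_of_norm_le_const hGbound
  rw [heq2] at hle2
  have hsimp2 : (x ε 1 - (ε * 1) • V x₀ - (ε ^ 2 * ((1:ℝ) ^ 2 / 2 - 1 / 2)) • W x₀)
      - (x ε 0 - (ε * 0) • V x₀ - (ε ^ 2 * ((0:ℝ) ^ 2 / 2 - 0 / 2)) • W x₀)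
      = x ε 1 - x₀ - ε • V x₀ := by
    rw [hinit ε]
    norm_num
    abel
  rw [hsimp2] at hle2
  have hfinal : ‖x ε 1 - x₀ - ε • V x₀‖ ≤ C₂ * |ε| ^ 3 := by
    calc ‖x ε 1 - x₀ - ε • V x₀‖ ≤ C₂ * |ε| ^ 3 * |1 - 0| := hle2
      _ = C₂ * |ε| ^ 3 := by norm_num
  calc ‖x ε 1 - x₀ - ε • V x₀‖ ≤ C₂ * |ε| ^ 3 := hfinal
    _ = C₂ * ‖ε ^ 3‖ := by rw [Real.norm_eq_abs, abs_pow]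
end
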